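/- The bivariate polynomial 1 − x^a·y − (x^a+1)²·x^a·y² − x^{3a}·y³ + x^{4a}·y⁴ is irreducible in ℤ[x,y] for every positive integer a. -/

import Mathlib

set_option maxRecDepth 8000

section Helpers
open Polynomial

-- number theory: 3^a(4*3^{2a}+17*3^a+4) is not a square
lemma no_sq (a : ℕ) (ha : 1 ≤ a) (s : ℤ) :
    s ^ 2 ≠ 4 * 3 ^ (3 * a) + 17 * 3 ^ (2 * a) + 4 * 3 ^ a := by
  intro h
  set n := s.natAbs with hn
  have hns : (n : ℤ) ^ 2 = s ^ 2 := by
    rw [hn]; push_cast [Int.natAbs_sq]; exact sq_abs s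
  have hN : n ^ 2 = 3 ^ a * (4 * 3 ^ (2 * a) + 17 * 3 ^ a + 4) := by
    have : (n:ℤ)^2 = (3:ℤ) ^ a * (4 * 3 ^ (2 * a) + 17 * 3 ^ a + 4) := by
      rw [hns, h]; ring
    exact_mod_cast this
  set q : ℕ := 4 * 3 ^ (2 * a) + 17 * 3 ^ a + 4 with hq
  have hq0 : q ≠ 0 := by positivity
  have h3q : ¬ (3 ∣ q) := by
    have h1 : (3:ℕ) ∣ 3 ^ (2*a) := dvd_pow_self 3 (by omega)
    have h2 : (3:ℕ) ∣ 3 ^ a := dvd_pow_self 3 (by omega)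
    rw [hq]; omega
  have hn0 : n ≠ 0 := by
    intro h0; rw [h0] at hN
    have : 0 < 3 ^ a * q := by positivity
    omega
  -- factorization at 3
  have hfact : (n ^ 2).factorization 3 = (3 ^ a * q).factorization 3 := by rw [hN]
  rw [Nat.factorization_pow, Nat.factorization_mul (by positivity) hq0,
    Nat.Prime.factorization_pow (p := 3) Nat.prime_three] at hfact
  simp [Nat.factorization_eq_zero_of_not_dvd h3q] at hfact
  set m := n.factorization 3 with hm
  have ham : a = 2 * m := by omega
  have hm1 : 1 ≤ m := by omega
  have hdvd : 3 ^ m ∣ n :=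
    (Nat.Prime.pow_dvd_iff_le_factorization Nat.prime_three hn0).mpr (le_refl m)
  obtain ⟨r, hr⟩ := hdvd
  set S : ℕ := 3 ^ m with hS
  have hr2 : r ^ 2 = 4 * S ^ 4 + 17 * S ^ 2 + 4 := by
    have h1 : S ^ 2 * r ^ 2 = S ^ 2 * (4 * S ^ 4 + 17 * S ^ 2 + 4) := by
      have e1 : n ^ 2 = S ^ 2 * r ^ 2 := by rw [hr]; ring
      have e2 : (3:ℕ) ^ a = S ^ 2 := by rw [hS, ham]; ring
      have e3 : (3:ℕ) ^ (2*a) = S ^ 4 := by rw [hS, ham]; ring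
      rw [← e1, hN, hq, e2, e3]
    exact Nat.eq_of_mul_eq_mul_left (by positivity) h1
  rcases eq_or_lt_of_le hm1 with h1 | h2
  · -- m = 1, S = 3, r^2 = 481
    have hS3 : S = 3 := by simp [hS, ← h1]
    rw [hS3] at hr2
    norm_num at hr2
    -- r^2 = 481
    rcases le_or_gt r 21 with h | h
    · have := Nat.pow_le_pow_left h 2; omega
    · have : 22 ≤ r := h
      have := Nat.pow_le_pow_left this 2; omega
  · -- m ≥ 2, S ≥ 9
    have hS9 : 9 ≤ S := by
      calc (9:ℕ) = 3 ^ 2 := by norm_num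
      _ ≤ 3 ^ m := Nat.pow_le_pow_right (by norm_num) h2
  -- squeeze
    have hSS : 81 ≤ S ^ 2 := by nlinarith
    have hub : ¬ (2 * S ^ 2 + 5 ≤ r) := by
      intro hle
      have := Nat.pow_le_pow_left hle 2
      nlinarith
    have hlb : ¬ (r ≤ 2 * S ^ 2 + 4) := by
      intro hle
      have := Nat.pow_le_pow_left hle 2
      nlinarith
    omega

-- divisors of X^n in ℤ[X]
lemma divisor_X_pow {u v : Polynomial ℤ} {n : ℕ} (h : u * v = X ^ n) :
    ∃ i ≤ n, ∃ ε : ℤ, (ε = 1 ∨ ε = -1) ∧ u = C ε * X ^ i ∧ v = C ε * X ^ (n - i) := by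
  have hu : u ∣ X ^ n := ⟨v, h.symm⟩
  obtain ⟨i, hin, hass⟩ := (dvd_prime_pow Polynomial.prime_X n).mp hu
  obtain ⟨w, hw⟩ := hass.symm
  obtain ⟨r, hru, hrC⟩ := Polynomial.isUnit_iff.mp w.isUnit
  have hr : r = 1 ∨ r = -1 := Int.isUnit_iff.mp hru
  refine ⟨i, hin, r, hr, ?_, ?_⟩
  · rw [← hw, ← hrC]; ring
  · have hu' : u = C r * X ^ i := by rw [← hw, ← hrC]; ring
    have hCX : (C r * X ^ i : Polynomial ℤ) ≠ 0 := by
      apply mul_ne_zero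
      · simp; rcases hr with rfl | rfl <;> norm_num
      · exact pow_ne_zero _ X_ne_zero
    apply mul_left_cancel₀ hCX
    have hRR : C r * X ^ i * (C r * X ^ (n - i)) = X ^ n := by
      have hrr : (C r : Polynomial ℤ) * C r = 1 := by rcases hr with rfl | rfl <;> simp
      calc C r * X ^ i * (C r * X ^ (n - i)) = (C r * C r) * (X ^ i * X ^ (n - i)) := by ring
      _ = X ^ n := by rw [hrr, ← pow_add, Nat.add_sub_cancel' hin]; ring
    rw [hRR, ← hu']; exact h




-- Case: degree split 1 + 3
lemma core13 (a i : ℕ) (ha : 1 ≤ a) (hi : i ≤ 4 * a) (ε : ℤ) (hε : ε = 1 ∨ ε = -1)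
    (g1 g2 : Polynomial ℤ)
    (h1 : C ε * X ^ i + g1 = -(X ^ a))
    (h2 : g2 + C ε * X ^ i * g1 = -((X ^ a + 1) ^ 2 * X ^ a))
    (h3 : C ε * X ^ (4 * a - i) + C ε * X ^ i * g2 = -(X ^ (3 * a))) : False := by
  rcases hε with rfl | rfl
  · simp only [map_one, one_mul] at h1 h2 h3
    have hfin : (X ^ (4 * a - i) + X ^ (3 * a) + X ^ (a + 2 * i) + X ^ (3 * i) : Polynomial ℤ)
        = X ^ (3 * a + i) + 2 * X ^ (2 * a + i) + X ^ (a + i) := by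
      linear_combination h3 - X ^ i * h2 + (X ^ i * X ^ i) * h1
    have hc := congrArg (fun p => Polynomial.coeff p (2 * a + i)) hfin
    simp only [coeff_add, coeff_mul_C, coeff_X_pow, coeff_ofNat_mul, two_mul] at hc
    norm_num [coeff_add, coeff_X_pow] at hc
    split_ifs at hc <;> omega
  · -- ε = -1 : evaluate at 1
    have e1 := congrArg (Polynomial.eval 1) h1
    have e2 := congrArg (Polynomial.eval 1) h2
    have e3 := congrArg (Polynomial.eval 1) h3
    simp [eval_add, eval_mul, eval_pow, eval_neg, eval_C, eval_X, one_pow] at e1 e2 e3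
    omega

-- Case: degree split 2 + 2
lemma core22 (a i : ℕ) (ha : 1 ≤ a) (hi2 : i ≤ 2 * a) (ε : ℤ) (hε : ε = 1 ∨ ε = -1)
    (b d : Polynomial ℤ)
    (h1 : b + d = -(X ^ a))
    (h2 : C ε * X ^ i + C ε * X ^ (4 * a - i) + b * d = -((X ^ a + 1) ^ 2 * X ^ a))
    (h3 : C ε * (b * X ^ (4 * a - i) + d * X ^ i) = -(X ^ (3 * a))) : False := by
  set m := 2 * a - i with hm
  have e4 : 4 * a - i = i + 2 * m := by omega
  have e3 : 3 * a = i + (a + m) := by omega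
  rw [e4, e3] at h3
  rcases hε with rfl | rfl
  all_goals simp only [map_one, one_mul, map_neg, neg_mul, C_1] at h1 h2 h3
  · -- ε = 1
    have key : X ^ i * (b * X ^ (2 * m) + d) = X ^ i * (-(X ^ (a + m))) := by
      linear_combination h3
    have h3c : b * X ^ (2 * m) + d = -(X ^ (a + m)) :=
      mul_left_cancel₀ (pow_ne_zero i X_ne_zero) key
    have h5 : b * X ^ (2 * m) - b = -(X ^ (a + m)) + X ^ a := by
      linear_combination h3c - h1
    rcases Nat.eq_zero_or_pos m with hm0 | hm1
    · -- m = 0 : i = 2a, use eval at 3 and no_sq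
      rw [hm0] at h5
      have hi2a : i = 2 * a := by omega
      rw [hi2a] at h2
      have e4' : 4 * a - 2 * a = 2 * a := by omega
      rw [e4'] at h2
      have v1 := congrArg (Polynomial.eval 3) h1
      have v2 := congrArg (Polynomial.eval 3) h2
      simp only [eval_add, eval_mul, eval_pow, eval_neg, eval_X, eval_one, eval_C] at v1 v2
      apply no_sq a ha (Polynomial.eval 3 b - Polynomial.eval 3 d)
      linear_combination (Polynomial.eval 3 b + Polynomial.eval 3 d - 3 ^ a) * v1 - 4 * v2
    · -- m ≥ 1 : derivative at 1
      have hd := congrArg (fun p => Polynomial.eval 1 (Polynomial.derivative p)) h5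
      simp only [derivative_sub, derivative_add, derivative_neg, derivative_mul,
        derivative_X_pow, eval_sub, eval_add, eval_neg, eval_mul, eval_pow, eval_C,
        eval_X, one_pow, mul_one, eval_natCast] at hd
      push_cast at hd
      have hkey : (m : ℤ) * (2 * Polynomial.eval 1 b + 1) = 0 := by linear_combination hd
      rcases mul_eq_zero.mp hkey with h | h
      · have : m = 0 := by exact_mod_cast h
        omega
      · omega
  · -- ε = -1 : eval at 1
    have key : X ^ i * (-(b * X ^ (2 * m) + d)) = X ^ i * (-(X ^ (a + m))) := by
      linear_combination h3
    have h3c : -(b * X ^ (2 * m) + d) = -(X ^ (a + m)) :=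
      mul_left_cancel₀ (pow_ne_zero i X_ne_zero) key
    have v1 := congrArg (Polynomial.eval 1) h1
    have v2 := congrArg (Polynomial.eval 1) h3c
    simp [eval_add, eval_mul, eval_pow, eval_neg, eval_X, one_pow] at v1 v2
    omega


noncomputable def Qp (a : ℕ) : Polynomial (Polynomial ℤ) :=
  C 1 + C (-((X : Polynomial ℤ) ^ a)) * X
    + C (-(((X : Polynomial ℤ) ^ a + 1) ^ 2 * (X : Polynomial ℤ) ^ a)) * X ^ 2
    + C (-((X : Polynomial ℤ) ^ (3 * a))) * X ^ 3
    + C ((X : Polynomial ℤ) ^ (4 * a)) * X ^ 4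

lemma Qp_coeff0 (a : ℕ) : (Qp a).coeff 0 = 1 := by
  simp only [Qp, coeff_add, coeff_C_mul, coeff_X_pow, coeff_C, coeff_X]; norm_num
lemma Qp_coeff1 (a : ℕ) : (Qp a).coeff 1 = -((X : Polynomial ℤ) ^ a) := by
  simp only [Qp, coeff_add, coeff_C_mul, coeff_X_pow, coeff_C, coeff_X]; norm_num
lemma Qp_coeff2 (a : ℕ) :
    (Qp a).coeff 2 = -(((X : Polynomial ℤ) ^ a + 1) ^ 2 * (X : Polynomial ℤ) ^ a) := by
  simp only [Qp, coeff_add, coeff_C_mul, coeff_X_pow, coeff_C, coeff_X]; norm_num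
lemma Qp_coeff3 (a : ℕ) : (Qp a).coeff 3 = -((X : Polynomial ℤ) ^ (3 * a)) := by
  simp only [Qp, coeff_add, coeff_C_mul, coeff_X_pow, coeff_C, coeff_X]; norm_num
lemma Qp_coeff4 (a : ℕ) : (Qp a).coeff 4 = (X : Polynomial ℤ) ^ (4 * a) := by
  simp only [Qp, coeff_add, coeff_C_mul, coeff_X_pow, coeff_C, coeff_X]; norm_num

lemma Qp_natDegree (a : ℕ) : (Qp a).natDegree = 4 := by
  unfold Qp
  compute_degree!

lemma main13 (a : ℕ) (ha : 1 ≤ a) (F G : Polynomial (Polynomial ℤ))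
    (hFG : F * G = Qp a) (hF0 : F.coeff 0 = 1) (hG0 : G.coeff 0 = 1)
    (hdF : F.natDegree = 1) (hdG : G.natDegree = 3) : False := by
  have zF2 : F.coeff 2 = 0 := coeff_eq_zero_of_natDegree_lt (by omega)
  have zF3 : F.coeff 3 = 0 := coeff_eq_zero_of_natDegree_lt (by omega)
  have zF4 : F.coeff 4 = 0 := coeff_eq_zero_of_natDegree_lt (by omega)
  have zG4 : G.coeff 4 = 0 := coeff_eq_zero_of_natDegree_lt (by omega)
  have c1 := congrArg (fun p => p.coeff 1) hFG
  have c2 := congrArg (fun p => p.coeff 2) hFG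
  have c3 := congrArg (fun p => p.coeff 3) hFG
  have c4 := congrArg (fun p => p.coeff 4) hFG
  simp only [coeff_mul, Finset.Nat.sum_antidiagonal_eq_sum_range_succ_mk,
    Finset.sum_range_succ, Finset.sum_range_zero, Qp_coeff1, Qp_coeff2, Qp_coeff3, Qp_coeff4,
    hF0, hG0, zF2, zF3, zF4, zG4, zero_add, add_zero, one_mul, mul_one, zero_mul,
    mul_zero] at c1 c2 c3 c4
  obtain ⟨i, hi, ε, hε, hf1, hg3⟩ := divisor_X_pow c4
  rw [hf1] at c1 c2 c3
  rw [hg3] at c3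
  exact core13 a i ha hi ε hε (G.coeff 1) (G.coeff 2)
    (by linear_combination c1) (by linear_combination c2) (by linear_combination c3)

lemma main22 (a : ℕ) (ha : 1 ≤ a) (F G : Polynomial (Polynomial ℤ))
    (hFG : F * G = Qp a) (hF0 : F.coeff 0 = 1) (hG0 : G.coeff 0 = 1)
    (hdF : F.natDegree = 2) (hdG : G.natDegree = 2) : False := by
  have zF3 : F.coeff 3 = 0 := coeff_eq_zero_of_natDegree_lt (by omega)
  have zF4 : F.coeff 4 = 0 := coeff_eq_zero_of_natDegree_lt (by omega)
  have zG3 : G.coeff 3 = 0 := coeff_eq_zero_of_natDegree_lt (by omega)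
  have zG4 : G.coeff 4 = 0 := coeff_eq_zero_of_natDegree_lt (by omega)
  have c1 := congrArg (fun p => p.coeff 1) hFG
  have c2 := congrArg (fun p => p.coeff 2) hFG
  have c3 := congrArg (fun p => p.coeff 3) hFG
  have c4 := congrArg (fun p => p.coeff 4) hFG
  simp only [coeff_mul, Finset.Nat.sum_antidiagonal_eq_sum_range_succ_mk,
    Finset.sum_range_succ, Finset.sum_range_zero, Qp_coeff1, Qp_coeff2, Qp_coeff3, Qp_coeff4,
    hF0, hG0, zF3, zF4, zG3, zG4, zero_add, add_zero, one_mul, mul_one, zero_mul,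
    mul_zero] at c1 c2 c3 c4
  obtain ⟨i, hi, ε, hε, hf2, hg2⟩ := divisor_X_pow c4
  rw [hf2, hg2] at c2 c3
  by_cases hc : i ≤ 2 * a
  · exact core22 a i ha hc ε hε (F.coeff 1) (G.coeff 1)
      (by linear_combination c1) (by linear_combination c2) (by linear_combination c3)
  · have hc2 : 4 * a - i ≤ 2 * a := by omega
    have hswap : 4 * a - (4 * a - i) = i := by omega
    exact core22 a (4 * a - i) ha hc2 ε hε (G.coeff 1) (F.coeff 1)
      (by linear_combination c1)
      (by rw [hswap]; linear_combination c2)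
      (by rw [hswap]; linear_combination c3)

lemma mainsplit (a : ℕ) (ha : 1 ≤ a) (F G : Polynomial (Polynomial ℤ))
    (hFG : F * G = Qp a) (hF0 : F.coeff 0 = 1) (hG0 : G.coeff 0 = 1)
    (hdeg : F.natDegree + G.natDegree = 4) : F.natDegree = 0 ∨ G.natDegree = 0 := by
  by_cases hF : F.natDegree = 0
  · exact Or.inl hF
  by_cases hG : G.natDegree = 0
  · exact Or.inr hG
  exfalso
  have h1 : F.natDegree = 1 ∨ F.natDegree = 2 ∨ F.natDegree = 3 := by omega
  rcases h1 with h | h | h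
  · exact main13 a ha F G hFG hF0 hG0 h (by omega)
  · exact main22 a ha F G hFG hF0 hG0 h (by omega)
  · exact main13 a ha G F (by rw [mul_comm]; exact hFG) hG0 hF0 (by omega) h

lemma Qp_ne_zero (a : ℕ) : Qp a ≠ 0 := by
  intro h
  have := Qp_natDegree a
  rw [h] at this
  simp at this

theorem Qirr (a : ℕ) (ha : 1 ≤ a) : Irreducible (Qp a) := by
  constructor
  · intro hu
    have h := natDegree_eq_zero_of_isUnit hu
    rw [Qp_natDegree] at h
    omega
  · intro F G hQ
    have hFG : F * G = Qp a := hQ.symm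
    have hF : F ≠ 0 := by rintro rfl; rw [zero_mul] at hFG; exact Qp_ne_zero a hFG.symm
    have hG : G ≠ 0 := by rintro rfl; rw [mul_zero] at hFG; exact Qp_ne_zero a hFG.symm
    have hdeg : F.natDegree + G.natDegree = 4 := by
      rw [← Polynomial.natDegree_mul hF hG, hFG, Qp_natDegree]
    have c0 : F.coeff 0 * G.coeff 0 = 1 := by
      have := congrArg (fun p => p.coeff 0) hFG
      simpa [Polynomial.mul_coeff_zero, Qp_coeff0] using this
    have hu : IsUnit (F.coeff 0) := IsUnit.of_mul_eq_one _ c0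
    obtain ⟨r, hru, hrC⟩ := Polynomial.isUnit_iff.mp hu
    have hune : F.coeff 0 = 1 ∧ G.coeff 0 = 1 ∨ F.coeff 0 = -1 ∧ G.coeff 0 = -1 := by
      rcases Int.isUnit_iff.mp hru with rfl | rfl
      · have hf : F.coeff 0 = 1 := by rw [← hrC]; simp
        left
        refine ⟨hf, ?_⟩
        rw [hf, one_mul] at c0
        exact c0
      · have hf : F.coeff 0 = -1 := by rw [← hrC]; simp
        right
        refine ⟨hf, ?_⟩
        rw [hf] at c0
        linear_combination -c0
    have main : F.natDegree = 0 ∨ G.natDegree = 0 := by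
      rcases hune with ⟨hf, hg⟩ | ⟨hf, hg⟩
      · exact mainsplit a ha F G hFG hf hg hdeg
      · have hFG' : (-F) * (-G) = Qp a := by linear_combination hFG
        have := mainsplit a ha (-F) (-G) hFG' (by simp [hf]) (by simp [hg])
          (by simpa using hdeg)
        simpa using this
    have hIU : ∀ P : Polynomial (Polynomial ℤ),
        P.natDegree = 0 → (P.coeff 0 = 1 ∨ P.coeff 0 = -1) → IsUnit P := by
      intro P hP hc
      rw [Polynomial.eq_C_of_natDegree_eq_zero hP]
      rcases hc with h | h <;> rw [h]
      · simp
      · rw [map_neg, map_one]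
        exact (isUnit_one (M := Polynomial (Polynomial ℤ))).neg
    rcases main with h | h
    · left
      refine hIU F h ?_
      rcases hune with ⟨hf, _⟩ | ⟨hf, _⟩ <;> [exact Or.inl hf; exact Or.inr hf]
    · right
      refine hIU G h ?_
      rcases hune with ⟨_, hg⟩ | ⟨_, hg⟩ <;> [exact Or.inl hg; exact Or.inr hg]

end Helpers

section Transfer
open MvPolynomial Polynomial

noncomputable def E : MvPolynomial (Fin 2) ℤ ≃ₐ[ℤ] Polynomial (Polynomial ℤ) :=
  (renameEquiv ℤ (Equiv.swap 0 1)).trans ((MvPolynomial.finSuccEquiv ℤ 1).trans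
    (Polynomial.mapAlgEquiv ((renameEquiv ℤ (Equiv.equivPUnit.{1} (Fin 1))).trans (pUnitAlgEquiv ℤ : MvPolynomial PUnit.{1} ℤ ≃ₐ[ℤ] Polynomial ℤ))))

lemma E_X1 : E (X 1) = Polynomial.X := by
  simp [E, Equiv.swap_apply_right, finSuccEquiv_X_zero]

lemma E_X0 : E (X 0) = Polynomial.C Polynomial.X := by
  have h : (MvPolynomial.X (1 : Fin 2) : MvPolynomial (Fin 2) ℤ) = MvPolynomial.X (0 : Fin 1).succ := rfl
  simp [E, Equiv.swap_apply_left, h, finSuccEquiv_X_succ]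

lemma E_image (a : ℕ) :
    E (1 - (X 0) ^ a * X 1 - ((X 0) ^ a + 1) ^ 2 * (X 0) ^ a * (X 1) ^ 2
        - (X 0) ^ (3 * a) * (X 1) ^ 3 + (X 0) ^ (4 * a) * (X 1) ^ 4 :
        MvPolynomial (Fin 2) ℤ) =
      Polynomial.C 1 + Polynomial.C (-(Polynomial.X ^ a)) * Polynomial.X
        + Polynomial.C (-((Polynomial.X ^ a + 1) ^ 2 * Polynomial.X ^ a)) * Polynomial.X ^ 2
        + Polynomial.C (-(Polynomial.X ^ (3 * a))) * Polynomial.X ^ 3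
        + Polynomial.C (Polynomial.X ^ (4 * a)) * Polynomial.X ^ 4 := by
  simp only [map_sub, map_add, map_mul, map_pow, map_one, E_X0, E_X1]
  simp only [map_neg, map_mul, map_add, map_pow, map_one, Polynomial.C_1]
  ring


lemma E_image' (a : ℕ) :
    E (1 - (MvPolynomial.X 0) ^ a * MvPolynomial.X 1
        - ((MvPolynomial.X 0) ^ a + 1) ^ 2 * (MvPolynomial.X 0) ^ a * (MvPolynomial.X 1) ^ 2
        - (MvPolynomial.X 0) ^ (3 * a) * (MvPolynomial.X 1) ^ 3
        + (MvPolynomial.X 0) ^ (4 * a) * (MvPolynomial.X 1) ^ 4 :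
        MvPolynomial (Fin 2) ℤ) = Qp a := by
  rw [E_image]
  unfold Qp
  rfl
end Transfer

open MvPolynomial

theorem stmt_14 (a : ℕ) (ha : 1 ≤ a) :
    Irreducible
      (1 - (X 0) ^ a * X 1 - ((X 0) ^ a + 1) ^ 2 * (X 0) ^ a * (X 1) ^ 2
        - (X 0) ^ (3 * a) * (X 1) ^ 3 + (X 0) ^ (4 * a) * (X 1) ^ 4 :
        MvPolynomial (Fin 2) ℤ) := by
  have h2 : Irreducible (E (1 - (X 0) ^ a * X 1 - ((X 0) ^ a + 1) ^ 2 * (X 0) ^ a * (X 1) ^ 2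
        - (X 0) ^ (3 * a) * (X 1) ^ 3 + (X 0) ^ (4 * a) * (X 1) ^ 4 :
        MvPolynomial (Fin 2) ℤ)) := by
    rw [E_image' a]
    exact Qirr a ha
  exact (MulEquiv.irreducible_iff E).mp h2
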